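/- Zero-update property of flexible GBT: let D be a flexible-GBT dataset and let D' be obtained from D by adding one comparison (a, b, r, f). If r = Φ_f'((x_a − x_b)ᵀ β*(D)), then β*(D') = β*(D). -/

import Mathlib

open MeasureTheory RealInnerProductSpace

noncomputable section

/-- The cumulant generating function `Φ_μ(θ) = log ∫ exp(θ r) dμ(r)` of a measure `μ` on `ℝ`. -/
def cgfm (μ : Measure ℝ) (θ : ℝ) : ℝ := Real.log (∫ r, Real.exp (θ * r) ∂μ)

/-- `μ` has finite exponential moments: `∫ exp(θ r) dμ(r) < ∞` for every `θ`. -/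
def HasExpMoments (μ : Measure ℝ) : Prop :=
  ∀ θ : ℝ, Integrable (fun r => Real.exp (θ * r)) μ

/-- The quadratic form `v ↦ vᵀ M v`. -/
def quadForm {n : ℕ} (M : Matrix (Fin n) (Fin n) ℝ) (v : EuclideanSpace ℝ (Fin n)) : ℝ :=
  ∑ i, ∑ j, v i * M i j * v j

/-- The flexible-GBT negative log-posterior `L(β | D)` for a dataset `data` consisting of
comparisons `(a, b, r, f)` (entities `a, b`, value `r`, root law `f`), with embedding columns
`x a ∈ ℝ^D` and prior covariance matrix `S = Σ_β`. -/
def fgbtLoss {Dd A : ℕ} (x : Fin A → EuclideanSpace ℝ (Fin Dd))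
    (S : Matrix (Fin Dd) (Fin Dd) ℝ)
    (data : Multiset (Fin A × Fin A × ℝ × Measure ℝ))
    (β : EuclideanSpace ℝ (Fin Dd)) : ℝ :=
  (1 / 2) * quadForm S⁻¹ β
    + (data.map (fun q =>
        cgfm q.2.2.2 ⟪x q.1 - x q.2.1, β⟫ - q.2.2.1 * ⟪x q.1 - x q.2.1, β⟫)).sum

namespace ZU

open Real
open scoped NNReal ENNReal

lemma abs_le_exps (r : ℝ) : |r| ≤ Real.exp r + Real.exp (-r) := by
  rcases abs_cases r with ⟨h, _⟩ | ⟨h, _⟩ <;> rw [h] <;>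
    nlinarith [Real.add_one_le_exp r, Real.add_one_le_exp (-r), Real.exp_pos r, Real.exp_pos (-r)]

lemma integrable_mul_exp {μ : Measure ℝ} (hμ : HasExpMoments μ) (θ : ℝ) :
    Integrable (fun r => r * Real.exp (θ * r)) μ := by
  have hmeas : AEStronglyMeasurable (fun r : ℝ => r * Real.exp (θ * r)) μ :=
    (continuous_id.mul ((continuous_const.mul continuous_id).rexp)).aestronglyMeasurable
  refine ((hμ (θ+1)).add (hμ (θ-1))).mono' hmeas ?_
  filter_upwards with r
  have h2 : (0:ℝ) < Real.exp (θ * r) := Real.exp_pos _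
  calc ‖r * Real.exp (θ*r)‖ = |r| * Real.exp (θ*r) := by
        rw [norm_mul, Real.norm_eq_abs, Real.norm_eq_abs, abs_of_pos h2]
    _ ≤ (Real.exp r + Real.exp (-r)) * Real.exp (θ*r) :=
        mul_le_mul_of_nonneg_right (abs_le_exps r) h2.le
    _ = Real.exp ((θ+1)*r) + Real.exp ((θ-1)*r) := by
        rw [add_mul, ← Real.exp_add, ← Real.exp_add]; ring_nf

lemma expInt_pos {μ : Measure ℝ} [IsProbabilityMeasure μ] (hμ : HasExpMoments μ) (θ : ℝ) :
    0 < ∫ r, Real.exp (θ * r) ∂μ := by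
  have h := ProbabilityTheory.mgf_pos (X := id) (μ := μ) (t := θ) (by simpa using hμ θ)
  simpa [ProbabilityTheory.mgf] using h

lemma exp_mul_le {θ t r : ℝ} (ht : |t - θ| < 1) :
    Real.exp (t * r) ≤ Real.exp ((θ+1)*r) + Real.exp ((θ-1)*r) := by
  rcases le_or_gt 0 r with hr | hr
  · have : t * r ≤ (θ+1) * r := by
      apply mul_le_mul_of_nonneg_right _ hr
      have := abs_lt.mp ht; linarith [this.2]
    have h1 : Real.exp (t*r) ≤ Real.exp ((θ+1)*r) := Real.exp_le_exp.mpr this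
    linarith [Real.exp_pos ((θ-1)*r)]
  · have : t * r ≤ (θ-1) * r := by
      have h := abs_lt.mp ht
      nlinarith [h.1]
    have h1 : Real.exp (t*r) ≤ Real.exp ((θ-1)*r) := Real.exp_le_exp.mpr this
    linarith [Real.exp_pos ((θ+1)*r)]

lemma hasDerivAt_expInt {μ : Measure ℝ} [IsProbabilityMeasure μ] (hμ : HasExpMoments μ) (θ : ℝ) :
    HasDerivAt (fun t => ∫ r, Real.exp (t * r) ∂μ) (∫ r, r * Real.exp (θ * r) ∂μ) θ := by
  have hbound : Integrable (fun r => (Real.exp r + Real.exp (-r)) *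
      (Real.exp ((θ+1)*r) + Real.exp ((θ-1)*r))) μ := by
    have h := (((hμ (θ+2)).add (hμ θ)).add ((hμ θ).add (hμ (θ-2))))
    refine h.congr (Filter.Eventually.of_forall fun r => ?_)
    simp only [Pi.add_apply, mul_add, add_mul, ← Real.exp_add]
    ring_nf
  have h := hasDerivAt_integral_of_dominated_loc_of_deriv_le (μ := μ)
      (F := fun t r => Real.exp (t * r)) (F' := fun t r => r * Real.exp (t * r))
      (x₀ := θ)
      (bound := fun r => (Real.exp r + Real.exp (-r)) * (Real.exp ((θ+1)*r) + Real.exp ((θ-1)*r)))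
      (Metric.ball_mem_nhds θ one_pos)
      (Filter.Eventually.of_forall fun t =>
        (((continuous_const.mul continuous_id).rexp).aestronglyMeasurable))
      (hμ θ)
      ((continuous_id.mul ((continuous_const.mul continuous_id).rexp)).aestronglyMeasurable)
      (Filter.Eventually.of_forall fun r => ?_) hbound
      (Filter.Eventually.of_forall fun r => ?_)
  · exact h.2
  · intro t ht
    rw [Metric.mem_ball, Real.dist_eq] at ht
    have h2 : (0:ℝ) < Real.exp (t * r) := Real.exp_pos _
    calc ‖r * Real.exp (t*r)‖ = |r| * Real.exp (t*r) := by
          rw [norm_mul, Real.norm_eq_abs, Real.norm_eq_abs, abs_of_pos h2]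
      _ ≤ (Real.exp r + Real.exp (-r)) * (Real.exp ((θ+1)*r) + Real.exp ((θ-1)*r)) :=
          mul_le_mul (abs_le_exps r) (exp_mul_le ht) h2.le (by positivity)
  · intro t _
    simpa [mul_comm] using ((hasDerivAt_id t).mul_const r).exp

lemma hasDerivAt_cgfm {μ : Measure ℝ} [IsProbabilityMeasure μ] (hμ : HasExpMoments μ) (θ : ℝ) :
    HasDerivAt (cgfm μ)
      ((∫ r, r * Real.exp (θ*r) ∂μ) / (∫ r, Real.exp (θ*r) ∂μ)) θ :=
  (hasDerivAt_expInt hμ θ).log (expInt_pos hμ θ).ne'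

lemma cgfm_tangent {μ : Measure ℝ} [IsProbabilityMeasure μ] (hμ : HasExpMoments μ) (s t : ℝ) :
    cgfm μ s + ((∫ r, r * Real.exp (s*r) ∂μ) / (∫ r, Real.exp (s*r) ∂μ)) * (t - s)
      ≤ cgfm μ t := by
  set Ms : ℝ := ∫ r, Real.exp (s*r) ∂μ with hMs
  set Mt : ℝ := ∫ r, Real.exp (t*r) ∂μ with hMt
  set N : ℝ := ∫ r, r * Real.exp (s*r) ∂μ with hN
  have hMs0 : 0 < Ms := expInt_pos hμ s
  have hMt0 : 0 < Mt := expInt_pos hμ t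
  set φ : ℝ → ℝ≥0 := fun r => Real.toNNReal (Real.exp (s*r)) with hφ
  have φmeas : Measurable φ :=
    ((Real.continuous_exp.comp (continuous_const.mul continuous_id)).measurable).real_toNNReal
  set ν : Measure ℝ :=
    (ENNReal.ofReal Ms)⁻¹ • μ.withDensity (fun r => (φ r : ℝ≥0∞)) with hν
  have hofReal : ∀ r, ((φ r : ℝ≥0) : ℝ≥0∞) = ENNReal.ofReal (Real.exp (s*r)) := fun r => rfl
  have hlint : ∫⁻ r, ((φ r : ℝ≥0) : ℝ≥0∞) ∂μ = ENNReal.ofReal Ms := by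
    simp only [hofReal]
    rw [← ofReal_integral_eq_lintegral_ofReal (hμ s)
      (Filter.Eventually.of_forall fun r => (Real.exp_pos _).le)]
  have hMsne : ENNReal.ofReal Ms ≠ 0 := by
    simp [ENNReal.ofReal_eq_zero, not_le, hMs0]
  have hprob : IsProbabilityMeasure ν := by
    constructor
    rw [hν, Measure.smul_apply, smul_eq_mul, withDensity_apply _ MeasurableSet.univ,
      setLIntegral_univ, hlint, ENNReal.inv_mul_cancel hMsne ENNReal.ofReal_ne_top]
  have key : ∀ g : ℝ → ℝ, ∫ r, g r ∂ν = Ms⁻¹ * ∫ r, Real.exp (s*r) * g r ∂μ := by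
    intro g
    rw [hν, integral_smul_measure, integral_withDensity_eq_integral_smul φmeas]
    simp only [hφ, NNReal.smul_def, Real.coe_toNNReal _ (Real.exp_pos _).le, smul_eq_mul,
      ENNReal.toReal_inv, ENNReal.toReal_ofReal hMs0.le]
  have keyInt : ∀ g : ℝ → ℝ, Integrable (fun r => Real.exp (s*r) * g r) μ → Integrable g ν := by
    intro g hg
    rw [hν]
    refine Integrable.smul_measure ?_ (ENNReal.inv_ne_top.mpr hMsne)
    rw [integrable_withDensity_iff_integrable_smul φmeas]
    refine hg.congr (Filter.Eventually.of_forall fun r => ?_)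
    simp [hφ, NNReal.smul_def, Real.coe_toNNReal _ (Real.exp_pos _).le]
  have hfi : Integrable (fun r => (t - s) * r) ν := by
    refine keyInt _ ?_
    refine ((integrable_mul_exp hμ s).const_mul (t - s)).congr
      (Filter.Eventually.of_forall fun r => by ring)
  have hgi : Integrable (Real.exp ∘ fun r => (t - s) * r) ν := by
    refine keyInt _ ?_
    refine (hμ t).congr (Filter.Eventually.of_forall fun r => ?_)
    simp only [Function.comp_apply, ← Real.exp_add]
    ring_nf
  have hJ := (convexOn_exp).map_integral_le (μ := ν) (f := fun r => (t - s) * r)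
    Real.continuous_exp.continuousOn isClosed_univ
    (Filter.Eventually.of_forall fun _ => trivial) hfi hgi
  have hmean : ∫ r, (t - s) * r ∂ν = (t - s) * (N / Ms) := by
    rw [key]
    have : ∫ r, Real.exp (s*r) * ((t - s) * r) ∂μ = (t - s) * N := by
      rw [hN, ← integral_const_mul]
      exact integral_congr_ae (Filter.Eventually.of_forall fun r => by ring)
    rw [this]; ring
  have hrhs : ∫ r, Real.exp ((t - s) * r) ∂ν = Ms⁻¹ * Mt := by
    rw [key]
    congr 1
    rw [hMt]
    exact integral_congr_ae (Filter.Eventually.of_forall fun r => by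
      simp only [← Real.exp_add]; ring_nf)
  rw [hmean] at hJ
  have hJ' : Real.exp ((t - s) * (N / Ms)) ≤ Ms⁻¹ * Mt := by
    calc Real.exp ((t - s) * (N / Ms)) ≤ ∫ r, Real.exp ((t - s) * r) ∂ν := hJ
      _ = Ms⁻¹ * Mt := hrhs
  have hlog := Real.log_le_log (Real.exp_pos _) hJ'
  rw [Real.log_exp, Real.log_mul (by positivity) hMt0.ne', Real.log_inv] at hlog
  have hc1 : cgfm μ s = Real.log Ms := rfl
  have hc2 : cgfm μ t = Real.log Mt := rfl
  rw [hc1, hc2]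
  have hc3 : (N / Ms) * (t - s) = (t - s) * (N / Ms) := by ring
  linarith [hlog]

lemma cgfm_midpoint {μ : Measure ℝ} [IsProbabilityMeasure μ] (hμ : HasExpMoments μ) (s t : ℝ) :
    cgfm μ ((s + t)/2) ≤ (cgfm μ s + cgfm μ t)/2 := by
  have h1 := cgfm_tangent hμ ((s+t)/2) s
  have h2 := cgfm_tangent hμ ((s+t)/2) t
  set D := (∫ r, r * Real.exp (((s+t)/2)*r) ∂μ) / (∫ r, Real.exp (((s+t)/2)*r) ∂μ) with hD
  have h3 : D * (s - (s+t)/2) + D * (t - (s+t)/2) = 0 := by ring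
  linarith

lemma quadForm_parallelogram {n : ℕ} (M : Matrix (Fin n) (Fin n) ℝ)
    (v w : EuclideanSpace ℝ (Fin n)) :
    quadForm M (v + w) + quadForm M (v - w) = 2 * quadForm M v + 2 * quadForm M w := by
  simp only [quadForm, PiLp.add_apply, PiLp.sub_apply, Finset.mul_sum,
    ← Finset.sum_add_distrib]
  exact Finset.sum_congr rfl fun i _ => Finset.sum_congr rfl fun j _ => by ring

lemma quadForm_pos {n : ℕ} {M : Matrix (Fin n) (Fin n) ℝ} (hM : M.PosDef)
    {v : EuclideanSpace ℝ (Fin n)} (hv : v ≠ 0) : 0 < quadForm M v := by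
  have hv' : (fun i => v i) ≠ (0 : Fin n → ℝ) := by
    intro h0
    apply hv
    ext i
    exact congrFun h0 i
  have h := hM.dotProduct_mulVec_pos hv'
  have heq : quadForm M v = dotProduct (star fun i => v i) (M.mulVec fun i => v i) := by
    simp only [quadForm, dotProduct, Matrix.mulVec, star_trivial, Finset.mul_sum]
    exact Finset.sum_congr rfl fun i _ => Finset.sum_congr rfl fun j _ => by ring
  rw [heq]
  exact h

end ZU

/-- zero-update property of flexible GBT. If `D'` is obtained from `D` by
adding one comparison `(a, b, r, f)` with `r = Φ_f'((x_a − x_b)ᵀ β*(D))`, then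
`β*(D') = β*(D)`. -/
theorem fgbt_zero_update
    {Dd A : ℕ} (x : Fin A → EuclideanSpace ℝ (Fin Dd))
    (S : Matrix (Fin Dd) (Fin Dd) ℝ) (hS : S.PosDef)
    (data : Multiset (Fin A × Fin A × ℝ × Measure ℝ))
    (hvalid : ∀ q ∈ data, IsProbabilityMeasure q.2.2.2 ∧ HasExpMoments q.2.2.2)
    (a b : Fin A) (r : ℝ) (f : Measure ℝ) [IsProbabilityMeasure f] (hf : HasExpMoments f)
    (βD βD' : EuclideanSpace ℝ (Fin Dd))
    (hminD : ∀ γ : EuclideanSpace ℝ (Fin Dd),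
      fgbtLoss x S data βD ≤ fgbtLoss x S data γ)
    (hminD' : ∀ γ : EuclideanSpace ℝ (Fin Dd),
      fgbtLoss x S ((a, b, r, f) ::ₘ data) βD' ≤ fgbtLoss x S ((a, b, r, f) ::ₘ data) γ)
    (hr : r = deriv (cgfm f) ⟪x a - x b, βD⟫) :
    βD' = βD := by
  classical
  by_contra hne
  set u : EuclideanSpace ℝ (Fin Dd) := x a - x b with hu
  -- derivative of the cgf of f
  have hderiv : deriv (cgfm f) ⟪u, βD⟫ =
      (∫ ρ, ρ * Real.exp (⟪u, βD⟫ * ρ) ∂f) / (∫ ρ, Real.exp (⟪u, βD⟫ * ρ) ∂f) :=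
    (ZU.hasDerivAt_cgfm hf _).deriv
  -- the added term is minimized at βD
  have hg : ∀ γ : EuclideanSpace ℝ (Fin Dd),
      cgfm f ⟪u, βD⟫ - r * ⟪u, βD⟫ ≤ cgfm f ⟪u, γ⟫ - r * ⟪u, γ⟫ := by
    intro γ
    have ht := ZU.cgfm_tangent hf ⟪u, βD⟫ ⟪u, γ⟫
    rw [← hderiv, ← hr] at ht
    have hexp : r * (⟪u, γ⟫ - ⟪u, βD⟫) = r * ⟪u, γ⟫ - r * ⟪u, βD⟫ := by ring
    linarith
  -- midpoint setup
  set m : EuclideanSpace ℝ (Fin Dd) := (2:ℝ)⁻¹ • (βD + βD') with hm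
  set w : EuclideanSpace ℝ (Fin Dd) := (2:ℝ)⁻¹ • (βD - βD') with hwdef
  have hmw1 : m + w = βD := by rw [hm, hwdef]; module
  have hmw2 : m - w = βD' := by rw [hm, hwdef]; module
  have hw0 : w ≠ 0 := by
    rw [hwdef]
    intro h
    rcases smul_eq_zero.mp h with h | h
    · norm_num at h
    · exact hne (sub_eq_zero.mp h).symm
  have hqw : 0 < quadForm S⁻¹ w := ZU.quadForm_pos hS.inv hw0
  have hinner : ∀ y : EuclideanSpace ℝ (Fin Dd), ⟪y, m⟫ = (⟪y, βD⟫ + ⟪y, βD'⟫)/2 := by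
    intro y
    rw [hm, real_inner_smul_right, inner_add_right]
    ring
  -- per-comparison midpoint inequality
  have hterm : ∀ q ∈ (a, b, r, f) ::ₘ data,
      (fun q : Fin A × Fin A × ℝ × Measure ℝ =>
        cgfm q.2.2.2 ⟪x q.1 - x q.2.1, m⟫ - q.2.2.1 * ⟪x q.1 - x q.2.1, m⟫) q ≤
      (fun q : Fin A × Fin A × ℝ × Measure ℝ =>
        ((cgfm q.2.2.2 ⟪x q.1 - x q.2.1, βD⟫ - q.2.2.1 * ⟪x q.1 - x q.2.1, βD⟫) +
         (cgfm q.2.2.2 ⟪x q.1 - x q.2.1, βD'⟫ - q.2.2.1 * ⟪x q.1 - x q.2.1, βD'⟫))/2) q := by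
    intro q hq
    have hpm : IsProbabilityMeasure q.2.2.2 ∧ HasExpMoments q.2.2.2 := by
      rcases Multiset.mem_cons.mp hq with h | h
      · subst h; exact ⟨‹IsProbabilityMeasure f›, hf⟩
      · exact hvalid q h
    haveI := hpm.1
    have hmid := ZU.cgfm_midpoint hpm.2 ⟪x q.1 - x q.2.1, βD⟫ ⟪x q.1 - x q.2.1, βD'⟫
    simp only
    rw [hinner]
    have haff : q.2.2.1 * ((⟪x q.1 - x q.2.1, βD⟫ + ⟪x q.1 - x q.2.1, βD'⟫)/2)
        = (q.2.2.1 * ⟪x q.1 - x q.2.1, βD⟫ + q.2.2.1 * ⟪x q.1 - x q.2.1, βD'⟫)/2 := by ring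
    linarith
  -- sum the midpoint inequalities
  have h1 := Multiset.sum_map_le_sum_map _ _ hterm
  have h2 : (((a, b, r, f) ::ₘ data).map (fun q : Fin A × Fin A × ℝ × Measure ℝ =>
        ((cgfm q.2.2.2 ⟪x q.1 - x q.2.1, βD⟫ - q.2.2.1 * ⟪x q.1 - x q.2.1, βD⟫) +
         (cgfm q.2.2.2 ⟪x q.1 - x q.2.1, βD'⟫ - q.2.2.1 * ⟪x q.1 - x q.2.1, βD'⟫))/2)).sum
      = ((((a, b, r, f) ::ₘ data).map (fun q : Fin A × Fin A × ℝ × Measure ℝ =>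
          cgfm q.2.2.2 ⟪x q.1 - x q.2.1, βD⟫ - q.2.2.1 * ⟪x q.1 - x q.2.1, βD⟫)).sum
        + (((a, b, r, f) ::ₘ data).map (fun q : Fin A × Fin A × ℝ × Measure ℝ =>
          cgfm q.2.2.2 ⟪x q.1 - x q.2.1, βD'⟫ - q.2.2.1 * ⟪x q.1 - x q.2.1, βD'⟫)).sum)/2 := by
    rw [eq_div_iff (by norm_num : (2:ℝ) ≠ 0), ← Multiset.sum_map_mul_right,
      ← Multiset.sum_map_add]
    refine congrArg Multiset.sum ?_
    exact Multiset.map_congr rfl fun q _ => by ring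
  -- parallelogram identity for the quadratic part
  have hpar := ZU.quadForm_parallelogram S⁻¹ m w
  rw [hmw1, hmw2] at hpar
  -- midpoint bound for the full loss
  have hLm : fgbtLoss x S ((a, b, r, f) ::ₘ data) m ≤
      (fgbtLoss x S ((a, b, r, f) ::ₘ data) βD
        + fgbtLoss x S ((a, b, r, f) ::ₘ data) βD')/2 - (1/2) * quadForm S⁻¹ w := by
    simp only [fgbtLoss]
    rw [h2] at h1
    linarith
  -- split the loss over the added comparison
  have hsplit : ∀ β : EuclideanSpace ℝ (Fin Dd),
      fgbtLoss x S ((a, b, r, f) ::ₘ data) β =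
      (cgfm f ⟪u, β⟫ - r * ⟪u, β⟫) + fgbtLoss x S data β := by
    intro β
    simp only [fgbtLoss, Multiset.map_cons, Multiset.sum_cons, hu]
    ring
  have hle1 : fgbtLoss x S ((a, b, r, f) ::ₘ data) βD
      ≤ fgbtLoss x S ((a, b, r, f) ::ₘ data) βD' := by
    rw [hsplit βD, hsplit βD']
    exact add_le_add (hg βD') (hminD βD')
  have hle2 := hminD' m
  linarith [hqw, hle1, hle2, hLm]

end
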